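/- Let ι(x) = (1−x)/(1+x). For every irrational x ∈ (0,1): ι(x) is an irrational number in (0,1); T(ι(x)) = ι(T(x)); and for every digit A ∈ 𝒜, x ∈ I_A if and only if ι(x) ∈ I_{φ(A)}. Consequently, for every n ≥ 1 the n-th SCF digit of ι(x) equals φ applied to the n-th SCF digit of x. -/

import Mathlib

open MeasureTheory Real Set Filter Topology

namespace SCF

/-- The involution `ι(x) = (1−x)/(1+x)`. -/
noncomputable def iota (x : ℝ) : ℝ := (1 - x) / (1 + x)

/-- Even continued-fraction step.  For `y ∈ (0,1/2]` one has
`⌊(1/y+1)/2⌋ = k` whenever `1/y ∈ (2k−1, 2k+1)`, so `Te y = |1/y − 2k|`;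
explicitly `Te y = 1/y − 2` on `[1/3,1/2]`, `Te y = 1/y − 2k` on
`[1/(2k+1), 1/(2k))` and `Te y = 2k − 1/y` on `[1/(2k), 1/(2k−1))` (`k ≥ 2`). -/
noncomputable def Te (y : ℝ) : ℝ := |1 / y - 2 * (⌊(1 / y + 1) / 2⌋ : ℝ)|

/-- The spliced continued fraction (SCF) map `T : [0,1] → [0,1]`, with
`T 0 = 0`, `T 1 = 1`.  On `(0,1/2]` it is the even continued fraction map
(see `Te`), and on `(1/2,1)` it is the odd–odd map, which is the conjugate
`ι ∘ Te ∘ ι` of the even map; this agrees with the branchwise definition: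
`T x = (k x − (k−1))/(k − (k+1) x)` on `((k−1)/k, (2k−1)/(2k+1)]` and
`T x = (k − (k+1) x)/(k x − (k−1))` on `((2k−1)/(2k+1), k/(k+1)]` for `k ≥ 2`. -/
noncomputable def T (x : ℝ) : ℝ :=
  if x ≤ 0 then 0
  else if 1 ≤ x then 1
  else if x ≤ 1 / 2 then Te x
  else iota (Te (iota x))

/-- Parity label of a digit: `e` (even cusp) or `o` (odd–odd cusp). -/
inductive Par | e | o
deriving DecidableEq

/-- A candidate SCF digit `(a, ε)_s`. -/
structure Digit where
  a : ℤ
  eps : ℤ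
  s : Par
deriving DecidableEq

/-- The digit set `𝒜 = {(k,ε)_s : k ≥ 2, ε = ±1, s ∈ {e,o}} ∪ {(1,+1)_e}`. -/
def Digit.Valid (d : Digit) : Prop :=
  (2 ≤ d.a ∧ (d.eps = 1 ∨ d.eps = -1)) ∨ (d.a = 1 ∧ d.eps = 1 ∧ d.s = Par.e)

/-- The branch intervals `I_{(a,ε)_s}` of the SCF map. -/
noncomputable def branch (d : Digit) : Set ℝ :=
  match d.s with
  | Par.e =>
      if d.a = 1 then Set.Icc (1/3 : ℝ) (1/2)
      else if d.eps = 1 then Set.Ico (1 / (2 * (d.a : ℝ) + 1)) (1 / (2 * (d.a : ℝ)))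
      else Set.Ico (1 / (2 * (d.a : ℝ))) (1 / (2 * (d.a : ℝ) - 1))
  | Par.o =>
      if d.eps = 1 then
        Set.Ioc ((2 * (d.a : ℝ) - 1) / (2 * (d.a : ℝ) + 1)) ((d.a : ℝ) / ((d.a : ℝ) + 1))
      else
        Set.Ioc (((d.a : ℝ) - 1) / (d.a : ℝ)) ((2 * (d.a : ℝ) - 1) / (2 * (d.a : ℝ) + 1))

open Classical in
/-- The SCF digit of a point `y` (the unique valid digit `d` with `y ∈ I_d`;
well defined for every `y ∈ (0,1)`). -/
noncomputable def digit (y : ℝ) : Digit :=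
  if h : ∃ d : Digit, d.Valid ∧ y ∈ branch d then h.choose else ⟨1, 1, Par.e⟩

/-- The `n`-th SCF digit `(a_n(x), ε_n(x))_{s_n(x)}` of `x`, `n ≥ 1`,
determined by `T^[n−1] x ∈ I_{(a_n,ε_n)_{s_n}}`. -/
noncomputable def dig (n : ℕ) (x : ℝ) : Digit := digit (T^[n - 1] x)

/-- The `n`-th SCF partial quotient `a_n(x)`. -/
noncomputable def a (n : ℕ) (x : ℝ) : ℤ := (dig n x).a

/-- The invariant density `f_μ`. -/
noncomputable def fdens (x : ℝ) : ℝ :=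
  2 / (Real.log (2 + Real.sqrt 3) * (1 - (2 - Real.sqrt 3) * x) * (1 + Real.sqrt 3 * x))

/-- The absolutely continuous `T`-invariant probability measure `μ` on `(0,1)`. -/
noncomputable def mu : Measure ℝ :=
  (volume.restrict (Set.Ioo (0 : ℝ) 1)).withDensity fun x => ENNReal.ofReal (fdens x)

/-- The inverse branches `h_{(a,ε)_s}` of the SCF map `T`. -/
noncomputable def h (d : Digit) (x : ℝ) : ℝ :=
  match d.s with
  | Par.e => 1 / (2 * (d.a : ℝ) + (d.eps : ℝ) * x)
  | Par.o =>
      if d.eps = 1 then (((d.a : ℝ) - 1) * x + (d.a : ℝ)) / ((d.a : ℝ) * x + ((d.a : ℝ) + 1))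
      else ((d.a : ℝ) * x + ((d.a : ℝ) - 1)) / (((d.a : ℝ) + 1) * x + (d.a : ℝ))

/-- Composed inverse branch `h_{A^{(n)}} = h_{A₁} ∘ ⋯ ∘ h_{A_n}` of a word. -/
noncomputable def hWord (l : List Digit) : ℝ → ℝ :=
  l.foldr (fun d g => h d ∘ g) id

/-- The dual inverse branches `bar h_{(b,η)_t}`. -/
noncomputable def hbar (d : Digit) (y : ℝ) : ℝ :=
  match d.s with
  | Par.e => (d.eps : ℝ) / (2 * (d.a : ℝ) + y)
  | Par.o =>
      1 / (1 + (d.eps : ℝ) / (((d.a : ℝ) - ((max 0 d.eps : ℤ) : ℝ)) + 1 / (1 + y)))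

/-- The matrix `M_{(a,ε)_s}` associated with the inverse branch `h_{(a,ε)_s}`. -/
noncomputable def Mdig (d : Digit) : Matrix (Fin 2) (Fin 2) ℝ :=
  match d.s with
  | Par.e => !![0, 1; (d.eps : ℝ), 2 * (d.a : ℝ)]
  | Par.o =>
      !![(d.a : ℝ) - ((max 0 d.eps : ℤ) : ℝ), (d.a : ℝ) - ((max 0 d.eps : ℤ) : ℝ) + (d.eps : ℝ);
         (d.a : ℝ) - ((max 0 d.eps : ℤ) : ℝ) + 1, (d.a : ℝ) - ((max 0 d.eps : ℤ) : ℝ) + (d.eps : ℝ) + 1]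

/-- `M_n(x) = M_{(a₁,ε₁)_{s₁}} ⋯ M_{(a_n,ε_n)_{s_n}}`. -/
noncomputable def Mn (n : ℕ) (x : ℝ) : Matrix (Fin 2) (Fin 2) ℝ :=
  ((List.range n).map fun i => Mdig (digit (T^[i] x))).prod

/-- `P_n(x)`: the `(1,2)`-entry of `M_n(x)` (numerator of the `n`-th convergent). -/
noncomputable def Pc (n : ℕ) (x : ℝ) : ℝ := Mn n x 0 1

/-- `Q_n(x)`: the `(2,2)`-entry of `M_n(x)` (denominator of the `n`-th convergent). -/
noncomputable def Qc (n : ℕ) (x : ℝ) : ℝ := Mn n x 1 1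


/-- The substitution `φ : 𝒜 → 𝒜` exchanging the parities `e` and `o`, fixing
`(1,+1)_e`. -/
def phi (d : Digit) : Digit :=
  if d.a = 1 ∧ d.eps = 1 ∧ d.s = Par.e then d
  else ⟨d.a, d.eps, match d.s with | Par.e => Par.o | Par.o => Par.e⟩


/-! ### Auxiliary lemmas -/

lemma iota_mem_Ioo {x : ℝ} (hx : x ∈ Set.Ioo (0:ℝ) 1) : iota x ∈ Set.Ioo (0:ℝ) 1 := by
  obtain ⟨h0, h1⟩ := hx
  constructor
  · exact div_pos (by linarith) (by linarith)
  · rw [iota, div_lt_one (by linarith)]; linarith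

lemma iota_irrational {x : ℝ} (hx : 0 < x) (h : Irrational x) : Irrational (iota x) := by
  have h1 : (1:ℝ) + x ≠ 0 := by linarith
  have he : iota x = (2:ℝ) * (1 + x)⁻¹ - 1 := by rw [iota]; field_simp; ring
  have h2 : Irrational (1 + x) := by simpa using h.intCast_add 1
  have h4 : Irrational (2 * (1 + x)⁻¹) := by
    simpa using h2.inv.intCast_mul (by norm_num : (2:ℤ) ≠ 0)
  have h5 : Irrational (2 * (1 + x)⁻¹ - 1) := by simpa using h4.sub_intCast 1
  rw [he]; exact h5

lemma iota_iota {x : ℝ} (hx : -1 < x) : iota (iota x) = x := by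
  have h1 : (1:ℝ) + x ≠ 0 := by linarith
  have h2 : (1:ℝ) + (1 - x) / (1 + x) = 2 / (1 + x) := by field_simp; norm_num
  have h3 : (1:ℝ) - (1 - x) / (1 + x) = 2 * x / (1 + x) := by field_simp; ring
  have h4 : (2:ℝ) / (1 + x) ≠ 0 := by positivity
  rw [iota, iota, h2, h3, div_eq_iff h4]
  field_simp

lemma iota_lt_iff {x c : ℝ} (hx : -1 < x) (hc : -1 < c) : iota x < c ↔ iota c < x := by
  rw [iota, iota, div_lt_iff₀ (by linarith), div_lt_iff₀ (by linarith)]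
  constructor <;> intro h <;> nlinarith

lemma iota_le_iff {x c : ℝ} (hx : -1 < x) (hc : -1 < c) : iota x ≤ c ↔ iota c ≤ x := by
  rw [iota, iota, div_le_iff₀ (by linarith), div_le_iff₀ (by linarith)]
  constructor <;> intro h <;> nlinarith

lemma neg_one_lt_iota {x : ℝ} (hx : -1 < x) : -1 < iota x := by
  have h0 : (0:ℝ) < 1 + x := by linarith
  have h2 : (1:ℝ) + iota x = 2 / (1 + x) := by rw [iota]; field_simp; norm_num
  nlinarith [div_pos (by norm_num : (0:ℝ) < 2) h0]

lemma iota_lt_iota {x y : ℝ} (hx : -1 < x) (hy : -1 < y) :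
    iota x < iota y ↔ y < x := by
  rw [iota_lt_iff hx (neg_one_lt_iota hy), iota_iota hy]

lemma iota_le_iota {x y : ℝ} (hx : -1 < x) (hy : -1 < y) :
    iota x ≤ iota y ↔ y ≤ x := by
  rw [iota_le_iff hx (neg_one_lt_iota hy), iota_iota hy]

lemma mem_Icc_iota {x l u : ℝ} (hx : -1 < x) (hl : -1 < l) (hu : -1 < u) :
    x ∈ Set.Icc l u ↔ iota x ∈ Set.Icc (iota u) (iota l) := by
  rw [Set.mem_Icc, Set.mem_Icc, iota_le_iota hu hx, iota_le_iota hx hl, and_comm]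

lemma mem_Ico_iota {x l u : ℝ} (hx : -1 < x) (hl : -1 < l) (hu : -1 < u) :
    x ∈ Set.Ico l u ↔ iota x ∈ Set.Ioc (iota u) (iota l) := by
  rw [Set.mem_Ico, Set.mem_Ioc, iota_lt_iota hu hx, iota_le_iota hx hl, and_comm]

lemma mem_Ioc_iota {x l u : ℝ} (hx : -1 < x) (hl : -1 < l) (hu : -1 < u) :
    x ∈ Set.Ioc l u ↔ iota x ∈ Set.Ico (iota u) (iota l) := by
  rw [Set.mem_Ioc, Set.mem_Ico, iota_le_iota hu hx, iota_lt_iota hx hl, and_comm]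

lemma Te_spec {y : ℝ} (h0 : 0 < y) (h2 : y < 1/2) (hirr : Irrational y) :
    Te y ∈ Set.Ioo (0:ℝ) 1 ∧ Irrational (Te y) := by
  have hu2 : 2 < 1 / y := by rw [lt_div_iff₀ h0]; linarith
  have huirr : Irrational (1 / y) := by rw [one_div]; exact hirr.inv
  set u := 1 / y with hu
  set k := ⌊(u + 1) / 2⌋ with hk
  have hk1 : (k:ℝ) ≤ (u + 1) / 2 := Int.floor_le _
  have hk2 : (u + 1) / 2 < k + 1 := Int.lt_floor_add_one _
  have hne1 : u ≠ ((2 * k - 1 : ℤ) : ℝ) := huirr.ne_int _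
  have hne2 : u ≠ ((2 * k : ℤ) : ℝ) := huirr.ne_int _
  push_cast at hne1 hne2
  have hl : 2 * (k:ℝ) - 1 < u := lt_of_le_of_ne (by linarith) (fun h => hne1 h.symm)
  have hr : u < 2 * (k:ℝ) + 1 := by linarith
  have hTe : Te y = |u - 2 * (k:ℝ)| := rfl
  refine ⟨⟨?_, ?_⟩, ?_⟩
  · rw [hTe]; exact abs_pos.mpr (sub_ne_zero.mpr (by intro h; exact hne2 (by linarith)))
  · rw [hTe, abs_lt]; constructor <;> linarith
  · rw [hTe]
    rcases abs_cases (u - 2 * (k:ℝ)) with ⟨he, _⟩ | ⟨he, _⟩ <;> rw [he]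
    · have := huirr.sub_intCast (2 * k)
      push_cast at this; convert this using 2 <;> push_cast <;> ring
    · have := (huirr.sub_intCast (2 * k)).neg
      push_cast at this; convert this using 2 <;> push_cast <;> ring

lemma floor_mid {x : ℝ} (h1 : 1/3 < x) (h2 : x < 1/2) : ⌊(1 / x + 1) / 2⌋ = 1 := by
  have hx0 : 0 < x := by linarith
  have ha : 2 < 1 / x := by rw [lt_div_iff₀ hx0]; linarith
  have hb : 1 / x < 3 := by rw [div_lt_iff₀ hx0]; linarith
  rw [Int.floor_eq_iff]
  push_cast; constructor <;> linarith

lemma Te_iota_mid {x : ℝ} (h1 : 1/3 < x) (h2 : x < 1/2) :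
    Te (iota x) = iota (Te x) := by
  have hx0 : 0 < x := by linarith
  have hxne : x ≠ 0 := ne_of_gt hx0
  have hi1 : 1/3 < iota x := by
    rw [show (1:ℝ)/3 = iota (1/2) by norm_num [iota]]
    exact (iota_lt_iota (by norm_num) (by linarith)).mpr h2
  have hi2 : iota x < 1/2 := by
    rw [show (1:ℝ)/2 = iota (1/3) by norm_num [iota]]
    exact (iota_lt_iota (by linarith) (by norm_num)).mpr h1
  have hi0 : 0 < iota x := by linarith
  have ha : 2 < 1 / x := by rw [lt_div_iff₀ hx0]; linarith
  have hb : 2 < 1 / iota x := by rw [lt_div_iff₀ hi0]; linarith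
  have hne1 : (1:ℝ) + x ≠ 0 := by linarith
  have hne2 : (1:ℝ) - x ≠ 0 := by intro h; linarith
  have hne3 : 1 + (1 / x - 2) ≠ 0 := by
    have h4 : 1 + (1/x - 2) = 1/x - 1 := by ring
    rw [h4]; intro h
    have : 1/x = 1 := by linarith
    linarith
  rw [Te, Te, floor_mid h1 h2, floor_mid hi1 hi2]
  simp only [Int.cast_one, mul_one]
  rw [abs_of_pos (by linarith), abs_of_pos (by linarith)]
  have hix : iota x = (1 - x) / (1 + x) := rfl
  have lhs : 1 / iota x - 2 = (3*x - 1)/(1 - x) := by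
    rw [hix, one_div_div]
    field_simp
    ring
  have rhs : iota (1/x - 2) = (3*x - 1)/(1 - x) := by
    rw [iota, div_eq_div_iff hne3 hne2]
    field_simp
    ring
  rw [lhs, rhs]

lemma T_pres {x : ℝ} (hx : x ∈ Set.Ioo (0:ℝ) 1) (hirr : Irrational x) :
    T x ∈ Set.Ioo (0:ℝ) 1 ∧ Irrational (T x) := by
  obtain ⟨h0, h1⟩ := hx
  have hne2 : x ≠ 1/2 := fun h => hirr.ne_rat (1/2) (by rw [h]; norm_num)
  rw [T, if_neg (by linarith), if_neg (by linarith)]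
  rcases lt_or_gt_of_ne hne2 with hlt | hgt
  · rw [if_pos hlt.le]
    exact Te_spec h0 hlt hirr
  · rw [if_neg (by linarith)]
    have hi : iota x ∈ Set.Ioo (0:ℝ) 1 := iota_mem_Ioo ⟨h0, h1⟩
    have hiirr : Irrational (iota x) := iota_irrational h0 hirr
    have hilt : iota x < 1/2 := by
      rw [show (1:ℝ)/2 = iota (1/3) by norm_num [iota]]
      exact (iota_lt_iota (by linarith) (by norm_num)).mpr (by linarith)
    obtain ⟨hT1, hT2⟩ := Te_spec hi.1 hilt hiirr
    exact ⟨iota_mem_Ioo hT1, iota_irrational hT1.1 hT2⟩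

lemma T_iota {x : ℝ} (hx : x ∈ Set.Ioo (0:ℝ) 1) (hirr : Irrational x) :
    T (iota x) = iota (T x) := by
  obtain ⟨h0, h1⟩ := hx
  obtain ⟨hi0, hi1⟩ := iota_mem_Ioo ⟨h0, h1⟩
  have hne2 : x ≠ 1/2 := fun h => hirr.ne_rat (1/2) (by rw [h]; norm_num)
  have hne3 : x ≠ 1/3 := fun h => hirr.ne_rat (1/3) (by rw [h]; norm_num)
  have half_iff : iota x ≤ 1/2 ↔ 1/3 ≤ x := by
    rw [show (1:ℝ)/2 = iota (1/3) by norm_num [iota]]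
    exact iota_le_iota (by linarith) (by norm_num)
  rw [T, T, if_neg (show ¬ iota x ≤ 0 by linarith), if_neg (show ¬ (1:ℝ) ≤ iota x by linarith),
    if_neg (show ¬ x ≤ 0 by linarith), if_neg (show ¬ (1:ℝ) ≤ x by linarith)]
  rcases lt_or_gt_of_ne hne3 with h3 | h3
  · -- x < 1/3 : iota x > 1/2
    have hgt : ¬ iota x ≤ 1/2 := by rw [half_iff]; linarith
    rw [if_neg hgt, if_pos (show x ≤ 1/2 by linarith), iota_iota (show (-1:ℝ) < x by linarith)]
  · rcases lt_or_gt_of_ne hne2 with h2 | h2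
    · -- 1/3 < x < 1/2
      rw [if_pos (half_iff.mpr h3.le), if_pos h2.le]
      exact Te_iota_mid h3 h2
    · -- x > 1/2
      rw [if_pos (show iota x ≤ 1/2 by rw [half_iff]; linarith),
        if_neg (show ¬ x ≤ 1/2 by linarith)]
      rw [iota_iota]
      have := abs_nonneg (1 / iota x - 2 * (⌊(1 / iota x + 1) / 2⌋ : ℝ))
      rw [Te]; linarith

lemma phi_valid {d : Digit} (hd : d.Valid) : (phi d).Valid := by
  rw [phi]
  split
  · exact hd
  · next hcon =>
    rcases hd with ⟨ha, he⟩ | ⟨ha, he, hs⟩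
    · exact Or.inl ⟨ha, he⟩
    · exact absurd ⟨ha, he, hs⟩ hcon

lemma phi_phi {d : Digit} (hd : d.Valid) : phi (phi d) = d := by
  obtain ⟨a, eps, s⟩ := d
  rcases hd with ⟨ha, he⟩ | ⟨ha, he, hs⟩
  · have ha : 2 ≤ a := ha
    have ha1 : ¬ (a = 1) := by omega
    cases s <;> simp [phi, ha1]
  · have ha : a = 1 := ha
    have he : eps = 1 := he
    have hs : s = Par.e := hs
    subst ha; subst he; subst hs
    simp [phi]

lemma phi_s_e {a eps : ℤ} : (phi ⟨a, eps, Par.e⟩) = if a = 1 ∧ eps = 1 then ⟨a, eps, Par.e⟩ else ⟨a, eps, Par.o⟩ := by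
  by_cases h : a = 1 ∧ eps = 1
  · simp [phi, h.1, h.2]
  · rw [if_neg h, phi, if_neg (by tauto)]

lemma branch_iff {x : ℝ} (hx : 0 < x) {d : Digit} (hd : d.Valid) :
    x ∈ branch d ↔ iota x ∈ branch (phi d) := by
  obtain ⟨a, eps, s⟩ := d
  rcases hd with ⟨ha, he⟩ | ⟨ha, he, hs⟩
  · have ha : 2 ≤ a := ha
    have he : eps = 1 ∨ eps = -1 := he
    have ha1 : ¬ (a = 1) := by omega
    have haR : (2:ℝ) ≤ (a:ℝ) := by exact_mod_cast ha
    have h2a : (0:ℝ) < 2*(a:ℝ) := by linarith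
    have h2a1 : (0:ℝ) < 2*(a:ℝ)+1 := by linarith
    have h2am : (0:ℝ) < 2*(a:ℝ)-1 := by linarith
    have haP : (0:ℝ) < (a:ℝ) := by linarith
    have p1 : (0:ℝ) < 1/(2*(a:ℝ)) := one_div_pos.mpr h2a
    have p2 : (0:ℝ) < 1/(2*(a:ℝ)+1) := one_div_pos.mpr h2a1
    have p3 : (0:ℝ) < 1/(2*(a:ℝ)-1) := one_div_pos.mpr h2am
    have e1 : iota (1 / (2*(a:ℝ))) = (2*(a:ℝ)-1)/(2*(a:ℝ)+1) := by
      rw [iota, div_eq_div_iff (by linarith) (ne_of_gt h2a1)]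
      field_simp
      try ring
    have e2 : iota (1 / (2*(a:ℝ)+1)) = (a:ℝ)/((a:ℝ)+1) := by
      rw [iota, div_eq_div_iff (by linarith) (by linarith : (a:ℝ)+1 ≠ 0)]
      field_simp
      try ring
    have e3 : iota (1 / (2*(a:ℝ)-1)) = ((a:ℝ)-1)/(a:ℝ) := by
      rw [iota, div_eq_div_iff (by linarith) (ne_of_gt haP)]
      field_simp
      try ring
    cases s
    · -- e → o
      have hphi : phi ⟨a, eps, Par.e⟩ = ⟨a, eps, Par.o⟩ := by
        rw [phi_s_e, if_neg (by tauto)]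
      rw [hphi]
      rcases he with he | he <;> subst he
      · have hb1 : branch ⟨a, 1, Par.e⟩ = Set.Ico (1/(2*(a:ℝ)+1)) (1/(2*(a:ℝ))) := by
          simp [branch, ha1]
        have hb2 : branch ⟨a, 1, Par.o⟩
            = Set.Ioc ((2*(a:ℝ)-1)/(2*(a:ℝ)+1)) ((a:ℝ)/((a:ℝ)+1)) := by
          simp [branch]
        rw [hb1, hb2, ← e1, ← e2]
        exact mem_Ico_iota (by linarith) (by linarith) (by linarith)
      · have hb1 : branch ⟨a, -1, Par.e⟩ = Set.Ico (1/(2*(a:ℝ))) (1/(2*(a:ℝ)-1)) := by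
          simp [branch, ha1]
        have hb2 : branch ⟨a, -1, Par.o⟩
            = Set.Ioc (((a:ℝ)-1)/(a:ℝ)) ((2*(a:ℝ)-1)/(2*(a:ℝ)+1)) := by
          simp [branch]
        rw [hb1, hb2, ← e1, ← e3]
        exact mem_Ico_iota (by linarith) (by linarith) (by linarith)
    · -- o → e
      have hphi : phi ⟨a, eps, Par.o⟩ = ⟨a, eps, Par.e⟩ := by
        rw [phi, if_neg (by simp)]
      rw [hphi]
      rcases he with he | he <;> subst he
      · have hb1 : branch ⟨a, 1, Par.o⟩
            = Set.Ioc ((2*(a:ℝ)-1)/(2*(a:ℝ)+1)) ((a:ℝ)/((a:ℝ)+1)) := by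
          simp [branch]
        have hb2 : branch ⟨a, 1, Par.e⟩ = Set.Ico (1/(2*(a:ℝ)+1)) (1/(2*(a:ℝ))) := by
          simp [branch, ha1]
        rw [hb1, hb2, ← e1, ← e2,
          mem_Ioc_iota (by linarith) (neg_one_lt_iota (by linarith))
            (neg_one_lt_iota (by linarith)),
          iota_iota (by linarith), iota_iota (by linarith)]
      · have hb1 : branch ⟨a, -1, Par.o⟩
            = Set.Ioc (((a:ℝ)-1)/(a:ℝ)) ((2*(a:ℝ)-1)/(2*(a:ℝ)+1)) := by
          simp [branch]
        have hb2 : branch ⟨a, -1, Par.e⟩ = Set.Ico (1/(2*(a:ℝ))) (1/(2*(a:ℝ)-1)) := by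
          simp [branch, ha1]
        rw [hb1, hb2, ← e1, ← e3,
          mem_Ioc_iota (by linarith) (neg_one_lt_iota (by linarith))
            (neg_one_lt_iota (by linarith)),
          iota_iota (by linarith), iota_iota (by linarith)]
  · have ha : a = 1 := ha
    have he : eps = 1 := he
    have hs : s = Par.e := hs
    subst ha; subst he; subst hs
    have hphi : phi ⟨1, 1, Par.e⟩ = ⟨1, 1, Par.e⟩ := by simp [phi]
    have hb : branch ⟨1, 1, Par.e⟩ = Set.Icc (1/3 : ℝ) (1/2) := by simp [branch]
    have e4 : iota (1/2 : ℝ) = 1/3 := by norm_num [iota]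
    have e5 : iota (1/3 : ℝ) = 1/2 := by norm_num [iota]
    rw [hphi, hb, mem_Icc_iota (by linarith) (by norm_num) (by norm_num), e4, e5]

lemma branch_e_floor {y : ℝ} (hy : y ∈ Set.Ioo (0:ℝ) 1) (hirr : Irrational y)
    {d : Digit} (hd : d.Valid) (hs : d.s = Par.e) (hm : y ∈ branch d) :
    (⌊1 / y⌋ = 2 * d.a ∧ d.eps = 1) ∨ (⌊1 / y⌋ = 2 * d.a - 1 ∧ d.eps = -1) := by
  obtain ⟨a, eps, s⟩ := d
  have hs : s = Par.e := hs
  subst hs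
  show (⌊1 / y⌋ = 2 * a ∧ eps = 1) ∨ (⌊1 / y⌋ = 2 * a - 1 ∧ eps = -1)
  have hy0 := hy.1
  have key : ∀ m : ℤ, (m:ℝ) < 1/y → 1/y < (m:ℝ) + 1 → ⌊1/y⌋ = m := by
    intro m hl hr
    rw [Int.floor_eq_iff]
    exact ⟨hl.le, hr⟩
  have hzlt : ∀ c : ℝ, 0 < c → y < 1/c → c < 1/y := by
    intro c hc h
    rw [lt_div_iff₀ hy0]
    calc c * y < c * (1/c) := mul_lt_mul_of_pos_left h hc
      _ = 1 := by field_simp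
  have hzgt : ∀ c : ℝ, 0 < c → 1/c < y → 1/y < c := by
    intro c hc h
    rw [div_lt_iff₀ hy0]
    calc (1:ℝ) = c * (1/c) := by field_simp
      _ < c * y := mul_lt_mul_of_pos_left h hc
  rcases hd with ⟨ha, he⟩ | ⟨ha, he, _⟩
  · have ha : 2 ≤ a := ha
    have he : eps = 1 ∨ eps = -1 := he
    have ha1 : ¬ (a = 1) := by omega
    have haR : (2:ℝ) ≤ (a:ℝ) := by exact_mod_cast ha
    rcases he with he | he <;> subst he
    · left
      have hb1 : branch ⟨a, 1, Par.e⟩ = Set.Ico (1/(2*(a:ℝ)+1)) (1/(2*(a:ℝ))) := by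
        simp [branch, ha1]
      rw [hb1, Set.mem_Ico] at hm
      obtain ⟨hl, hr⟩ := hm
      have hl' : 1/(2*(a:ℝ)+1) < y := by
        rcases lt_of_le_of_ne hl (fun h => hirr.ne_rat (1/(2*a+1)) (by push_cast; rw [← h])) with h
        exact h
      refine ⟨key (2*a) ?_ ?_, rfl⟩
      · push_cast
        exact hzlt _ (by linarith) hr
      · push_cast
        have := hzgt _ (by linarith : (0:ℝ) < 2*(a:ℝ)+1) hl'
        linarith
    · right
      have hb1 : branch ⟨a, -1, Par.e⟩ = Set.Ico (1/(2*(a:ℝ))) (1/(2*(a:ℝ)-1)) := by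
        simp [branch, ha1]
      rw [hb1, Set.mem_Ico] at hm
      obtain ⟨hl, hr⟩ := hm
      have hl' : 1/(2*(a:ℝ)) < y := by
        rcases lt_of_le_of_ne hl (fun h => hirr.ne_rat (1/(2*a)) (by push_cast; rw [← h])) with h
        exact h
      refine ⟨key (2*a - 1) ?_ ?_, rfl⟩
      · push_cast
        exact hzlt _ (by linarith) hr
      · push_cast
        have := hzgt _ (by linarith : (0:ℝ) < 2*(a:ℝ)) hl'
        linarith
  · have ha : a = 1 := ha
    have he : eps = 1 := he
    subst ha; subst he
    have hb : branch ⟨1, 1, Par.e⟩ = Set.Icc (1/3 : ℝ) (1/2) := by simp [branch]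
    rw [hb, Set.mem_Icc] at hm
    obtain ⟨hl, hr⟩ := hm
    have hl' : 1/3 < y := lt_of_le_of_ne hl (fun h => hirr.ne_rat (1/3) (by push_cast; rw [← h]))
    have hr' : y < 1/2 := lt_of_le_of_ne hr (fun h => hirr.ne_rat (1/2) (by push_cast; rw [h]))
    left
    refine ⟨key 2 ?_ ?_, rfl⟩
    · push_cast
      exact hzlt _ (by norm_num) (by linarith)
    · push_cast
      have := hzgt 3 (by norm_num) (by linarith)
      linarith

lemma branch_e_le_half {y : ℝ} {d : Digit} (hd : d.Valid) (hs : d.s = Par.e)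
    (hm : y ∈ branch d) : y ≤ 1/2 := by
  obtain ⟨a, eps, s⟩ := d
  have hs : s = Par.e := hs
  subst hs
  rcases hd with ⟨ha, he⟩ | ⟨ha, he, _⟩
  · have ha : 2 ≤ a := ha
    have he : eps = 1 ∨ eps = -1 := he
    have ha1 : ¬ (a = 1) := by omega
    have haR : (2:ℝ) ≤ (a:ℝ) := by exact_mod_cast ha
    rcases he with he | he <;> subst he
    · have hb1 : branch ⟨a, 1, Par.e⟩ = Set.Ico (1/(2*(a:ℝ)+1)) (1/(2*(a:ℝ))) := by
        simp [branch, ha1]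
      rw [hb1, Set.mem_Ico] at hm
      have h1 : 1/(2*(a:ℝ)) ≤ 1/2 := by
        apply one_div_le_one_div_of_le <;> linarith
      linarith [hm.2]
    · have hb1 : branch ⟨a, -1, Par.e⟩ = Set.Ico (1/(2*(a:ℝ))) (1/(2*(a:ℝ)-1)) := by
        simp [branch, ha1]
      rw [hb1, Set.mem_Ico] at hm
      have h1 : 1/(2*(a:ℝ)-1) ≤ 1/2 := by
        apply one_div_le_one_div_of_le <;> linarith
      linarith [hm.2]
  · have ha : a = 1 := ha
    subst ha
    have hb : branch ⟨1, eps, Par.e⟩ = Set.Icc (1/3 : ℝ) (1/2) := by simp [branch]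
    rw [hb, Set.mem_Icc] at hm
    exact hm.2

lemma branch_o_gt_half {y : ℝ} {d : Digit} (hd : d.Valid) (hs : d.s = Par.o)
    (hm : y ∈ branch d) : 1/2 < y := by
  obtain ⟨a, eps, s⟩ := d
  have hs : s = Par.o := hs
  subst hs
  rcases hd with ⟨ha, he⟩ | ⟨ha, he, hcon⟩
  · have ha : 2 ≤ a := ha
    have he : eps = 1 ∨ eps = -1 := he
    have haR : (2:ℝ) ≤ (a:ℝ) := by exact_mod_cast ha
    rcases he with he | he <;> subst he
    · have hb1 : branch ⟨a, 1, Par.o⟩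
          = Set.Ioc ((2*(a:ℝ)-1)/(2*(a:ℝ)+1)) ((a:ℝ)/((a:ℝ)+1)) := by
        simp [branch]
      rw [hb1, Set.mem_Ioc] at hm
      have h1 : (1:ℝ)/2 ≤ (2*(a:ℝ)-1)/(2*(a:ℝ)+1) := by
        rw [div_le_div_iff₀ (by norm_num) (by linarith)]
        linarith
      linarith [hm.1]
    · have hb1 : branch ⟨a, -1, Par.o⟩
          = Set.Ioc (((a:ℝ)-1)/(a:ℝ)) ((2*(a:ℝ)-1)/(2*(a:ℝ)+1)) := by
        simp [branch]
      rw [hb1, Set.mem_Ioc] at hm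
      have h1 : (1:ℝ)/2 ≤ ((a:ℝ)-1)/(a:ℝ) := by
        rw [div_le_div_iff₀ (by norm_num) (by linarith)]
        linarith
      linarith [hm.1]
  · have hcon : Par.o = Par.e := hcon
    exact absurd hcon (by decide)
  
lemma branch_unique {y : ℝ} (hy : y ∈ Set.Ioo (0:ℝ) 1) (hirr : Irrational y)
    {d d' : Digit} (hd : d.Valid) (hd' : d'.Valid)
    (h1 : y ∈ branch d) (h2 : y ∈ branch d') : d = d' := by
  have main : ∀ e e' : Digit, e.Valid → e'.Valid → e.s = Par.e → e'.s = Par.e →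
      ∀ z : ℝ, z ∈ Set.Ioo (0:ℝ) 1 → Irrational z →
      z ∈ branch e → z ∈ branch e' → e = e' := by
    intro e e' he he' hse hse' z hz hzirr hm hm'
    have f1 := branch_e_floor hz hzirr he hse hm
    have f2 := branch_e_floor hz hzirr he' hse' hm'
    obtain ⟨a, eps, s⟩ := e
    obtain ⟨a', eps', s'⟩ := e'
    have hse : s = Par.e := hse
    have hse' : s' = Par.e := hse'
    subst hse; subst hse'
    replace f1 : (⌊1/z⌋ = 2*a ∧ eps = 1) ∨ (⌊1/z⌋ = 2*a - 1 ∧ eps = -1) := f1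
    replace f2 : (⌊1/z⌋ = 2*a' ∧ eps' = 1) ∨ (⌊1/z⌋ = 2*a' - 1 ∧ eps' = -1) := f2
    rcases f1 with ⟨fa, fe⟩ | ⟨fa, fe⟩ <;> rcases f2 with ⟨fa', fe'⟩ | ⟨fa', fe'⟩ <;>
      subst fe <;> subst fe'
    · have : a = a' := by omega
      rw [this]
    · exfalso; omega
    · exfalso; omega
    · have : a = a' := by omega
      rw [this]
  cases hsd : d.s <;> cases hsd' : d'.s
  · exact main d d' hd hd' hsd hsd' y hy hirr h1 h2
  · exact absurd (branch_o_gt_half hd' hsd' h2) (not_lt.mpr (branch_e_le_half hd hsd h1))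
  · exact absurd (branch_o_gt_half hd hsd h1) (not_lt.mpr (branch_e_le_half hd' hsd' h2))
  · -- both odd: transfer via iota
    have hz : iota y ∈ Set.Ioo (0:ℝ) 1 := iota_mem_Ioo hy
    have hzirr : Irrational (iota y) := iota_irrational hy.1 hirr
    have hm1 : iota y ∈ branch (phi d) := (branch_iff hy.1 hd).mp h1
    have hm2 : iota y ∈ branch (phi d') := (branch_iff hy.1 hd').mp h2
    have hps : (phi d).s = Par.e := by
      obtain ⟨a, eps, s⟩ := d
      have hsd : s = Par.o := hsd
      subst hsd
      rw [phi, if_neg (by simp)]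
    have hps' : (phi d').s = Par.e := by
      obtain ⟨a, eps, s⟩ := d'
      have hsd' : s = Par.o := hsd'
      subst hsd'
      rw [phi, if_neg (by simp)]
    have := main (phi d) (phi d') (phi_valid hd) (phi_valid hd') hps hps'
      (iota y) hz hzirr hm1 hm2
    calc d = phi (phi d) := (phi_phi hd).symm
      _ = phi (phi d') := by rw [this]
      _ = d' := phi_phi hd'

lemma exists_branch {y : ℝ} (hy : y ∈ Set.Ioo (0:ℝ) 1) (hirr : Irrational y) :
    ∃ d : Digit, d.Valid ∧ y ∈ branch d := by
  have half : ∀ z : ℝ, z ∈ Set.Ioo (0:ℝ) 1 → Irrational z → z < 1/2 →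
      ∃ d : Digit, d.Valid ∧ z ∈ branch d := by
    intro z hz hzirr hhalf
    obtain ⟨hz0, hz1⟩ := hz
    have hu2 : 2 < 1/z := by rw [lt_div_iff₀ hz0]; linarith
    set n := ⌊1/z⌋ with hn
    have hn1 : (n:ℝ) ≤ 1/z := Int.floor_le _
    have hn2 : 1/z < (n:ℝ) + 1 := Int.lt_floor_add_one _
    have huirr : Irrational (1/z) := by rw [one_div]; exact hzirr.inv
    have hn1' : (n:ℝ) < 1/z := lt_of_le_of_ne hn1 (fun h => (huirr.ne_int n) h.symm)
    have hnge : 2 ≤ n := by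
      by_contra h
      push_neg at h
      have : (n:ℝ) + 1 ≤ 2 := by exact_mod_cast (by omega : n + 1 ≤ 2)
      linarith
    have hzltR : ∀ c : ℝ, 0 < c → c < 1/z → z < 1/c := by
      intro c hc h
      rw [lt_div_iff₀ hc, mul_comm]
      calc c * z < (1/z) * z := mul_lt_mul_of_pos_right h hz0
        _ = 1 := by field_simp
    have hzgtR : ∀ c : ℝ, 0 < c → 1/z < c → 1/c < z := by
      intro c hc h
      rw [div_lt_iff₀ hc, mul_comm]
      calc (1:ℝ) = (1/z) * z := by field_simp
        _ < c * z := mul_lt_mul_of_pos_right h hz0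
    rcases Int.even_or_odd n with ⟨m, hme⟩ | ⟨m, hmo⟩
    · -- n = 2m
      have hm2 : 1 ≤ m := by omega
      have hmR : (1:ℝ) ≤ (m:ℝ) := by exact_mod_cast hm2
      have hcast : ((n:ℤ):ℝ) = 2*(m:ℝ) := by rw [hme]; push_cast; ring
      have hb1 : 2*(m:ℝ) < 1/z := by rw [← hcast]; exact hn1'
      have hb2 : 1/z < 2*(m:ℝ) + 1 := by
        have h' := hn2
        rw [hcast] at h'
        exact h'
      have hzu : z < 1/(2*(m:ℝ)) := hzltR _ (by linarith) hb1
      have hzl : 1/(2*(m:ℝ)+1) < z := hzgtR _ (by linarith) hb2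
      rcases eq_or_lt_of_le hm2 with hm1 | hm1
      · refine ⟨⟨1, 1, Par.e⟩, Or.inr ⟨rfl, rfl, rfl⟩, ?_⟩
        have hb : branch ⟨1, 1, Par.e⟩ = Set.Icc (1/3 : ℝ) (1/2) := by simp [branch]
        rw [hb, Set.mem_Icc]
        rw [← hm1] at hzu hzl
        norm_num at hzu hzl
        constructor <;> linarith
      · refine ⟨⟨m, 1, Par.e⟩, Or.inl ⟨(show (2:ℤ) ≤ m by omega), Or.inl rfl⟩, ?_⟩
        have hm1' : ¬ (m = 1) := by omega
        have hb : branch ⟨m, 1, Par.e⟩ = Set.Ico (1/(2*(m:ℝ)+1)) (1/(2*(m:ℝ))) := by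
          simp [branch, hm1']
        rw [hb, Set.mem_Ico]
        exact ⟨hzl.le, hzu⟩
    · -- n = 2m + 1
      have hm2 : 1 ≤ m := by omega
      have hmR : (1:ℝ) ≤ (m:ℝ) := by exact_mod_cast hm2
      have hcast : ((n:ℤ):ℝ) = 2*(m:ℝ) + 1 := by rw [hmo]; push_cast; ring
      have hb1 : 2*(m:ℝ) + 1 < 1/z := by rw [← hcast]; exact hn1'
      have hb2 : 1/z < 2*(m:ℝ) + 2 := by
        have h' := hn2
        rw [hcast] at h'
        linarith
      refine ⟨⟨m + 1, -1, Par.e⟩, Or.inl ⟨(show (2:ℤ) ≤ m + 1 by omega), Or.inr rfl⟩, ?_⟩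
      have hm1' : ¬ (m + 1 = 1) := by omega
      have hb : branch ⟨m + 1, -1, Par.e⟩
          = Set.Ico (1/(2*((m:ℝ)+1))) (1/(2*((m:ℝ)+1)-1)) := by
        simp [branch, hm1']
      rw [hb, Set.mem_Ico]
      constructor
      · have h' := hzgtR (2*(m:ℝ)+2) (by linarith) hb2
        rw [show 2*((m:ℝ)+1) = 2*(m:ℝ)+2 by ring]
        exact h'.le
      · have h' := hzltR (2*(m:ℝ)+1) (by linarith) hb1
        rw [show 2*((m:ℝ)+1)-1 = 2*(m:ℝ)+1 by ring]
        exact h'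
  have hne2 : y ≠ 1/2 := fun h => hirr.ne_rat (1/2) (by rw [h]; norm_num)
  rcases lt_or_gt_of_ne hne2 with hlt | hgt
  · exact half y hy hirr hlt
  · have hi : iota y ∈ Set.Ioo (0:ℝ) 1 := iota_mem_Ioo hy
    have hiirr : Irrational (iota y) := iota_irrational hy.1 hirr
    have hilt : iota y < 1/2 := by
      rw [show (1:ℝ)/2 = iota (1/3) by norm_num [iota]]
      exact (iota_lt_iota (by linarith [hy.1]) (by norm_num)).mpr (by linarith)
    obtain ⟨d, hd, hm⟩ := half (iota y) hi hiirr hilt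
    refine ⟨phi d, phi_valid hd, ?_⟩
    have := (branch_iff hi.1 hd).mp hm
    rwa [iota_iota (by linarith [hy.1])] at this

lemma digit_eq {y : ℝ} (hy : y ∈ Set.Ioo (0:ℝ) 1) (hirr : Irrational y)
    {d : Digit} (hd : d.Valid) (hm : y ∈ branch d) : digit y = d := by
  rw [digit, dif_pos ⟨d, hd, hm⟩]
  have hspec := (⟨d, hd, hm⟩ : ∃ d : Digit, d.Valid ∧ y ∈ branch d).choose_spec
  exact branch_unique hy hirr hspec.1 hd hspec.2 hm

lemma digit_iota {y : ℝ} (hy : y ∈ Set.Ioo (0:ℝ) 1) (hirr : Irrational y) :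
    digit (iota y) = phi (digit y) := by
  obtain ⟨d, hd, hm⟩ := exists_branch hy hirr
  rw [digit_eq hy hirr hd hm]
  exact digit_eq (iota_mem_Ioo hy) (iota_irrational hy.1 hirr) (phi_valid hd)
    ((branch_iff hy.1 hd).mp hm)

/-- `ι` conjugates `T` with itself and intertwines the digits
via `φ`. -/
theorem iota_conjugacy :
    ∀ x ∈ Set.Ioo (0 : ℝ) 1, Irrational x →
      (Irrational (iota x) ∧ iota x ∈ Set.Ioo (0 : ℝ) 1) ∧
      T (iota x) = iota (T x) ∧
      (∀ d : Digit, d.Valid → (x ∈ branch d ↔ iota x ∈ branch (phi d))) ∧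
      (∀ n : ℕ, 1 ≤ n → dig n (iota x) = phi (dig n x))  := by
  intro x hx hirr
  have hinv : ∀ m : ℕ, (T^[m] x ∈ Set.Ioo (0:ℝ) 1 ∧ Irrational (T^[m] x)) ∧
      T^[m] (iota x) = iota (T^[m] x) := by
    intro m
    induction m with
    | zero => exact ⟨⟨hx, hirr⟩, rfl⟩
    | succ m ih =>
      obtain ⟨⟨hm, hmirr⟩, heq⟩ := ih
      rw [Function.iterate_succ_apply', Function.iterate_succ_apply']
      exact ⟨T_pres hm hmirr, by rw [heq, T_iota hm hmirr]⟩
  refine ⟨⟨iota_irrational hx.1 hirr, iota_mem_Ioo hx⟩, T_iota hx hirr,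
    fun d hd => branch_iff hx.1 hd, fun n hn => ?_⟩
  obtain ⟨⟨hm, hmirr⟩, heq⟩ := hinv (n - 1)
  rw [dig, dig, heq, digit_iota hm hmirr]


end SCF
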